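/- For every A₁,…,A_k ∈ GLₙ(ℝ), the image (Â_k ∘ ⋯ ∘ Â₁)(ℤⁿ) of ℤⁿ under the composition of discretizations is the model set modelled on the window W = (−1/2, 1/2]^{nk} ⊆ ℝ^{nk} and the lattice M ℤ^{n(k+1)} ⊆ ℝ^{n(k+1)}, where M is the block matrix with blocks M_{i,i} = A_i and M_{i,i+1} = −Id for 1 ≤ i ≤ k, and M_{k+1,k+1} = Id (all other blocks zero). -/

import Mathlib

def proj1 (m n : ℕ) (v : Fin (m + n) → ℝ) : Fin m → ℝ := fun i => v (Fin.castAdd n i)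

def proj2 (m n : ℕ) (v : Fin (m + n) → ℝ) : Fin n → ℝ := fun i => v (Fin.natAdd m i)

def IsLattice {d : ℕ} (Λ : Set (Fin d → ℝ)) : Prop :=
  ∃ b : Module.Basis (Fin d) ℝ (Fin d → ℝ),
    Λ = ((Submodule.span ℤ (Set.range ⇑b) : Submodule ℤ (Fin d → ℝ)) : Set (Fin d → ℝ))

def ModelSet (m n : ℕ) (Λ : Set (Fin (m + n) → ℝ)) (W : Set (Fin m → ℝ)) :
    Set (Fin n → ℝ) :=
  {x | ∃ l ∈ Λ, proj1 m n l ∈ W ∧ proj2 m n l = x}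

noncomputable def roundP (x : ℝ) : ℤ := ⌈x - 1/2⌉

noncomputable def roundPi {n : ℕ} (x : Fin n → ℝ) : Fin n → ℝ := fun i => (roundP (x i) : ℝ)

noncomputable def discr {n : ℕ} (A : Matrix (Fin n) (Fin n) ℝ) (x : Fin n → ℝ) :
    Fin n → ℝ :=
  roundPi (A.mulVec x)

def intLat (n : ℕ) : Set (Fin n → ℝ) := {x | ∀ i, ∃ k : ℤ, x i = (k : ℝ)}

lemma roundP_eq_iff (x : ℝ) (m : ℤ) :
    roundP x = m ↔ x - (m:ℝ) ∈ Set.Ioc (-(1:ℝ)/2) (1/2) := by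
  unfold roundP
  rw [Int.ceil_eq_iff, Set.mem_Ioc]
  constructor <;> rintro ⟨h1, h2⟩ <;> constructor <;> linarith

def chainSet (n k : ℕ) (A : Fin k → Matrix (Fin n) (Fin n) ℝ) : Set (Fin n → ℝ) :=
  {x | ∃ u : Fin (k+1) → Fin n → ℤ,
    (∀ i : Fin k, ∀ j, ((u i.succ j : ℤ) : ℝ) =
      (roundP ((A i).mulVec (fun j' => (u i.castSucc j' : ℝ)) j) : ℝ)) ∧
    (fun j => ((u (Fin.last k) j : ℤ) : ℝ)) = x}

lemma foldl_eq_chainSet (n k : ℕ) (A : Fin k → Matrix (Fin n) (Fin n) ℝ) :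
    (List.ofFn A).foldl (fun S M => discr M '' S) (intLat n) = chainSet n k A := by
  induction k with
  | zero =>
      simp only [List.ofFn_zero, List.foldl_nil]
      ext x
      constructor
      · intro hx
        refine ⟨fun _ j => Classical.choose (hx j), fun i => i.elim0, ?_⟩
        funext j
        exact (Classical.choose_spec (hx j)).symm
      · rintro ⟨u, -, hu⟩
        intro j
        exact ⟨u (Fin.last 0) j, (congrFun hu j).symm⟩
  | succ k ih =>
      rw [List.ofFn_succ', List.concat_eq_append, List.foldl_concat, ih]
      ext x
      constructor
      · rintro ⟨y, ⟨u, hu1, hu2⟩, rfl⟩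
        refine ⟨Fin.snoc u (fun j => roundP ((A (Fin.last k)).mulVec y j)), ?_, ?_⟩
        · intro i
          refine Fin.lastCases ?_ ?_ i
          · intro j
            rw [Fin.succ_last, Fin.snoc_last]
            simp only [Fin.snoc_castSucc]
            rw [← hu2]
          · intro i' j
            rw [Fin.succ_castSucc, Fin.snoc_castSucc]
            simp only [Fin.snoc_castSucc]
            exact hu1 i' j
        · funext j
          simp only [Fin.snoc_last, discr, roundPi]
      · rintro ⟨u, hu1, rfl⟩
        refine ⟨fun j => (u (Fin.last k).castSucc j : ℝ),
          ⟨fun i => u i.castSucc, ?_, rfl⟩, ?_⟩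
        · intro i j
          have h := hu1 i.castSucc j
          rw [Fin.succ_castSucc] at h
          exact h
        · funext j
          have h := hu1 (Fin.last k) j
          rw [Fin.succ_last] at h
          simp only [discr, roundPi]
          exact h.symm

lemma proj1_append (m n : ℕ) (a : Fin m → ℝ) (b : Fin n → ℝ) :
    proj1 m n (Fin.append a b) = a :=
  funext fun i => Fin.append_left a b i

lemma proj2_append (m n : ℕ) (a : Fin m → ℝ) (b : Fin n → ℝ) :
    proj2 m n (Fin.append a b) = b :=
  funext fun i => Fin.append_right a b i

theorem stmt8 (n k : ℕ) (A : Fin k → Matrix (Fin n) (Fin n) ℝ)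
    (hA : ∀ i, IsUnit (A i).det) :
    (List.ofFn A).foldl (fun S M => discr M '' S) (intLat n) =
      ModelSet (k * n) n
        {z : Fin (k * n + n) → ℝ | ∃ u : Fin (k + 1) → Fin n → ℤ,
          z = Fin.append
                (fun idx : Fin (k * n) =>
                  (A (finProdFinEquiv.symm idx).1).mulVec
                      (fun j => (u (Fin.castSucc (finProdFinEquiv.symm idx).1) j : ℝ))
                      (finProdFinEquiv.symm idx).2
                    - (u (Fin.succ (finProdFinEquiv.symm idx).1)
                        (finProdFinEquiv.symm idx).2 : ℝ))
                (fun j : Fin n => (u (Fin.last k) j : ℝ))}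
        {w : Fin (k * n) → ℝ | ∀ i, w i ∈ Set.Ioc (-(1:ℝ)/2) (1/2)} := by
  rw [foldl_eq_chainSet]
  ext x
  simp only [ModelSet, Set.mem_setOf_eq, chainSet]
  constructor
  · rintro ⟨u, h1, h2⟩
    refine ⟨_, ⟨u, rfl⟩, ?_, ?_⟩
    · rw [proj1_append]
      intro idx
      have h := h1 (finProdFinEquiv.symm idx).1 (finProdFinEquiv.symm idx).2
      refine (roundP_eq_iff _ _).mp ?_
      exact_mod_cast h.symm
    · rw [proj2_append]
      exact h2
  · rintro ⟨l, ⟨u, rfl⟩, hW, hproj⟩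
    rw [proj1_append] at hW
    rw [proj2_append] at hproj
    refine ⟨u, ?_, hproj⟩
    intro i j
    have h := hW (finProdFinEquiv (i, j))
    rw [Equiv.symm_apply_apply] at h
    have := (roundP_eq_iff _ _).mpr h
    exact_mod_cast this.symm
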